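/- For every α ∈ ℕ, the Lebesgue integral ∫₀¹ (y^α / (1-y)) · log y dy equals −π²/6 + ∑_{j=1}^{α} 1/j². In particular the integrand, which is negative on (0,1), is integrable. -/

import Mathlib

open MeasureTheory

open Set
open scoped ENNReal NNReal

lemma aux_pow_log (m : ℕ) :
    IntegrableOn (fun x : ℝ => x ^ m * (-Real.log x)) (Ioo 0 1) volume ∧
      ∫ x in Ioo (0:ℝ) 1, x ^ m * (-Real.log x) = 1 / ((m : ℝ) + 1) ^ 2 := by
  set c : ℝ := (m : ℝ) + 1 with hc
  have hc0 : c ≠ 0 := by positivity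
  set g : ℝ → ℝ := fun x => x ^ (m + 1) / c ^ 2 + x ^ m * Real.negMulLog x / c with hgdef
  have hgeq : ∀ x : ℝ, g x = x ^ (m + 1) / c ^ 2 - x ^ (m + 1) * Real.log x / c := by
    intro x
    simp only [hgdef, Real.negMulLog, pow_succ]
    ring
  have hgcont : Continuous g := by
    apply Continuous.add
    · exact (continuous_pow _).div_const _
    · exact ((continuous_pow _).mul Real.continuous_negMulLog).div_const _
  have hder : ∀ x ∈ Ioo (0:ℝ) 1, HasDerivAt g (x ^ m * (-Real.log x)) x := by
    intro x hx
    have hx0 : x ≠ 0 := ne_of_gt hx.1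
    have h1 : HasDerivAt (fun y : ℝ => y ^ (m + 1) / c ^ 2 - y ^ (m + 1) * Real.log y / c)
        (x ^ m * (-Real.log x)) x := by
      have hpow := hasDerivAt_pow (m + 1) x
      have hlog := Real.hasDerivAt_log hx0
      have := (hpow.div_const (c ^ 2)).sub ((hpow.mul hlog).div_const c)
      refine this.congr_deriv ?_
      push_cast
      field_simp
      ring
    exact h1.congr_of_eventuallyEq (Filter.Eventually.of_forall fun y => hgeq y)
  have hnonneg : ∀ x ∈ Ioo (0:ℝ) 1, 0 ≤ x ^ m * (-Real.log x) := by
    intro x hx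
    have : Real.log x ≤ 0 := Real.log_nonpos hx.1.le hx.2.le
    have hxm : (0:ℝ) ≤ x ^ m := pow_nonneg hx.1.le m
    nlinarith
  have hint : IntegrableOn (fun x : ℝ => x ^ m * (-Real.log x)) (Ioc 0 1) volume :=
    intervalIntegral.integrableOn_deriv_of_nonneg (hgcont.continuousOn) hder hnonneg
  have hintIoo : IntegrableOn (fun x : ℝ => x ^ m * (-Real.log x)) (Ioo 0 1) volume :=
    hint.mono_set Ioo_subset_Ioc_self
  refine ⟨hintIoo, ?_⟩
  have hII : IntervalIntegrable (fun x : ℝ => x ^ m * (-Real.log x)) volume 0 1 := by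
    rw [intervalIntegrable_iff_integrableOn_Ioc_of_le zero_le_one]
    exact hint
  have hftc := intervalIntegral.integral_eq_sub_of_hasDeriv_right_of_le zero_le_one
    hgcont.continuousOn (fun x hx => (hder x hx).hasDerivWithinAt) hII
  have hg1 : g 1 = 1 / c ^ 2 := by simp [hgdef]
  have hg0 : g 0 = 0 := by
    simp [hgdef, zero_pow (Nat.succ_ne_zero m)]
  rw [hg1, hg0, sub_zero] at hftc
  rw [← integral_Ioc_eq_integral_Ioo, ← intervalIntegral.integral_of_le zero_le_one, hftc, hc]

/-- `y ↦ y^α log y/(1-y)` is integrable on `(0,1)` and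
`∫₀¹ y^α/(1-y) · log y dy = −π²/6 + ∑_{j=1}^α 1/j²`. -/
theorem integral_pow_div_one_sub_mul_log (α : ℕ) :
    IntervalIntegrable (fun y : ℝ => y ^ α / (1 - y) * Real.log y) volume 0 1 ∧
      (∫ y in (0 : ℝ)..1, y ^ α / (1 - y) * Real.log y) =
        -(Real.pi ^ 2 / 6) + ∑ j ∈ Finset.Icc 1 α, 1 / (j : ℝ) ^ 2 := by
  set μ := volume.restrict (Ioo (0:ℝ) 1) with hμ
  set f : ℕ → ℝ → ℝ := fun n y => y ^ (α + n) * (-Real.log y) with hfdef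
  set h : ℝ → ℝ := fun y => y ^ α / (1 - y) * Real.log y with hhdef
  set S : ℝ := Real.pi ^ 2 / 6 - ∑ j ∈ Finset.Icc 1 α, 1 / (j : ℝ) ^ 2 with hSdef
  -- each f n integrable with known integral
  have hfint : ∀ n, IntegrableOn (f n) (Ioo 0 1) volume := fun n => (aux_pow_log (α + n)).1
  have hfval : ∀ n, ∫ y in Ioo (0:ℝ) 1, f n y = 1 / (((α : ℝ) + n) + 1) ^ 2 := by
    intro n
    have := (aux_pow_log (α + n)).2
    rw [this]
    push_cast
    ring_nf
  -- the sum
  have hS : HasSum (fun n : ℕ => 1 / (((α : ℝ) + n) + 1) ^ 2) S := by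
    have h0 := hasSum_zeta_two
    have h1 : HasSum (fun n : ℕ => (1:ℝ) / ((n + (α + 1) : ℕ) : ℝ) ^ 2)
        (Real.pi ^ 2 / 6 - ∑ i ∈ Finset.range (α + 1), 1 / (i : ℝ) ^ 2) :=
      (hasSum_nat_add_iff' (α + 1)).mpr h0
    have hrange : ∑ i ∈ Finset.range (α + 1), 1 / (i : ℝ) ^ 2
        = ∑ j ∈ Finset.Icc 1 α, 1 / (j : ℝ) ^ 2 := by
      have he : Finset.range (α + 1) = insert 0 (Finset.Icc 1 α) := by
        ext i; simp; omega
      rw [he, Finset.sum_insert (by simp)]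
      norm_num
    rw [hrange] at h1
    convert h1 using 2 with n
    push_cast
    ring
  -- pointwise nonnegativity of f n on Ioo
  have hnn : ∀ n, ∀ y ∈ Ioo (0:ℝ) 1, 0 ≤ f n y := by
    intro n y hy
    have : Real.log y ≤ 0 := Real.log_nonpos hy.1.le hy.2.le
    have hxm : (0:ℝ) ≤ y ^ (α + n) := pow_nonneg hy.1.le _
    simp only [hfdef]
    nlinarith
  -- pointwise tsum identity on Ioo
  have hpt : ∀ y ∈ Ioo (0:ℝ) 1, ∑' n, f n y = y ^ α / (1 - y) * (-Real.log y) := by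
    intro y hy
    have hgeo : ∑' n : ℕ, y ^ n = (1 - y)⁻¹ :=
      tsum_geometric_of_lt_one hy.1.le hy.2
    have : ∑' n, f n y = ∑' n : ℕ, (y ^ α * (-Real.log y)) * y ^ n := by
      congr 1; funext n; simp only [hfdef, pow_add]; ring
    rw [this, tsum_mul_left, hgeo, div_eq_mul_inv]
    ring
  -- summability of f · y pointwise
  have hsumy : ∀ y ∈ Ioo (0:ℝ) 1, Summable fun n => f n y := by
    intro y hy
    have : Summable fun n : ℕ => y ^ n := summable_geometric_of_lt_one hy.1.le hy.2
    have h2 : Summable fun n : ℕ => (y ^ α * (-Real.log y)) * y ^ n := this.mul_left _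
    refine h2.congr fun n => ?_
    simp only [hfdef, pow_add]; ring
  -- lintegral of ‖f n‖
  have hlint : ∀ n, (∫⁻ y, ‖f n y‖₊ ∂μ) = ENNReal.ofReal (1 / (((α : ℝ) + n) + 1) ^ 2) := by
    intro n
    have hae : ∀ᵐ y ∂μ, (‖f n y‖₊ : ℝ≥0∞) = ENNReal.ofReal (f n y) := by
      filter_upwards [ae_restrict_mem measurableSet_Ioo] with y hy
      exact Real.enorm_eq_ofReal (hnn n y hy)
    rw [lintegral_congr_ae hae,
      ← ofReal_integral_eq_lintegral_ofReal (hfint n)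
        ((ae_restrict_mem measurableSet_Ioo).mono fun y hy => hnn n y hy)]
    rw [hfval n]
  have hlsum : (∑' n, ∫⁻ y, ‖f n y‖₊ ∂μ) = ENNReal.ofReal S := by
    rw [tsum_congr hlint,
      ← ENNReal.ofReal_tsum_of_nonneg (fun n => by positivity) hS.summable, hS.tsum_eq]
  have hlsum_ne : (∑' n, ∫⁻ y, ‖f n y‖₊ ∂μ) ≠ ⊤ := by
    rw [hlsum]; exact ENNReal.ofReal_ne_top
  -- h is integrable on Ioo
  have hmeas : AEStronglyMeasurable h μ := by
    apply Measurable.aestronglyMeasurable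
    apply Measurable.mul
    · exact (measurable_id.pow_const α).div (measurable_const.sub measurable_id)
    · exact Real.measurable_log
  have habs : ∀ᵐ y ∂μ, (‖h y‖₊ : ℝ≥0∞) = ENNReal.ofReal (∑' n, f n y) := by
    filter_upwards [ae_restrict_mem measurableSet_Ioo] with y hy
    have h1 : h y = -(y ^ α / (1 - y) * (-Real.log y)) := by simp only [hhdef]; ring
    have h2 : 0 ≤ y ^ α / (1 - y) * (-Real.log y) := by
      have hl : Real.log y ≤ 0 := Real.log_nonpos hy.1.le hy.2.le
      have : (0:ℝ) ≤ y ^ α / (1 - y) := by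
        apply div_nonneg (pow_nonneg hy.1.le _)
        linarith [hy.2]
      nlinarith
    rw [hpt y hy, h1, ← Real.enorm_eq_ofReal h2]
    rw [nnnorm_neg]; rfl
  have hIntIoo : IntegrableOn h (Ioo 0 1) volume := by
    refine ⟨hmeas, ?_⟩
    show (∫⁻ y, (‖h y‖₊ : ℝ≥0∞) ∂μ) < ⊤
    rw [lintegral_congr_ae habs]
    have hofsum : ∀ᵐ y ∂μ, ENNReal.ofReal (∑' n, f n y) = ∑' n, ENNReal.ofReal (f n y) := by
      filter_upwards [ae_restrict_mem measurableSet_Ioo] with y hy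
      exact ENNReal.ofReal_tsum_of_nonneg (fun n => hnn n y hy) (hsumy y hy)
    have hmeasn : ∀ n : ℕ, Measurable fun y : ℝ => ENNReal.ofReal (f n y) := by
      intro n
      apply ENNReal.measurable_ofReal.comp
      exact (measurable_id.pow_const (α + n)).mul Real.measurable_log.neg
    rw [lintegral_congr_ae hofsum, lintegral_tsum fun n => (hmeasn n).aemeasurable]
    have : ∀ n, (∫⁻ y, ENNReal.ofReal (f n y) ∂μ) = ∫⁻ y, ‖f n y‖₊ ∂μ := by
      intro n
      refine lintegral_congr_ae ?_
      filter_upwards [ae_restrict_mem measurableSet_Ioo] with y hy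
      exact (Real.enorm_eq_ofReal (hnn n y hy)).symm
    rw [tsum_congr this, hlsum]
    exact ENNReal.ofReal_lt_top
  -- value
  have hval : ∫ y, h y ∂μ = -S := by
    have he1 : ∫ y, h y ∂μ = ∫ y, -(∑' n, f n y) ∂μ := by
      refine integral_congr_ae ?_
      filter_upwards [ae_restrict_mem measurableSet_Ioo] with y hy
      rw [hpt y hy]
      simp only [hhdef]; ring
    rw [he1, integral_neg]
    have he2 : ∫ y, (∑' n, f n y) ∂μ = ∑' n, ∫ y, f n y ∂μ :=
      integral_tsum (fun n => (hfint n).aestronglyMeasurable) hlsum_ne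
    rw [he2]
    have he3 : ∑' n, ∫ y, f n y ∂μ = S := by
      rw [tsum_congr (fun n => hfval n), hS.tsum_eq]
    rw [he3]
  constructor
  · rw [intervalIntegrable_iff_integrableOn_Ioc_of_le zero_le_one,
      integrableOn_Ioc_iff_integrableOn_Ioo]
    exact hIntIoo
  · rw [intervalIntegral.integral_of_le zero_le_one, integral_Ioc_eq_integral_Ioo]
    have : (∫ y in Ioo (0:ℝ) 1, h y) = -S := hval
    rw [this, hSdef]
    ring
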